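/- Let k ≥ 0 and let f_k(t) = k t on [-1/2,1/2]. Then for every ε > 0, ω(ε, f_k, F_c) = 2 ε. -/

import Mathlib

open MeasureTheory

/-- The local modulus of continuity of `f` at `0` over the class of convex
functions on `[-1/2, 1/2]`. -/
noncomputable def omegaConvex (ε : ℝ) (f : ℝ → ℝ) : ℝ :=
  sSup {d : ℝ | ∃ g : ℝ → ℝ, ConvexOn ℝ (Set.Icc (-(1:ℝ)/2) (1/2)) g ∧
    (∫ t in (-(1:ℝ)/2)..(1/2), (g t - f t)^2) ≤ ε^2 ∧ d = |g 0 - f 0|}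

namespace ModulusAux

open Set

lemma ii_of_bdd {u : ℝ → ℝ} {a b C : ℝ} (hab : a ≤ b)
    (hc : ContinuousOn u (Set.Ioo a b)) (hb : ∀ x ∈ Set.Ioo a b, |u x| ≤ C) :
    IntervalIntegrable u volume a b := by
  rw [intervalIntegrable_iff_integrableOn_Ioc_of_le hab,
    integrableOn_Ioc_iff_integrableOn_Ioo]
  refine ⟨hc.aestronglyMeasurable measurableSet_Ioo, ?_⟩
  refine HasFiniteIntegral.restrict_of_bounded (C := C) measure_Ioo_lt_top ?_
  exact (ae_restrict_iff' measurableSet_Ioo).mpr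
    (ae_of_all _ (by simpa [Real.norm_eq_abs] using hb))

lemma poly_int (c0 c1 c2 a b : ℝ) :
    ∫ t in a..b, (c0 + c1*t + c2*t^2) =
      c0*(b-a) + c1*(b^2-a^2)/2 + c2*(b^3-a^3)/3 := by
  have i1 : IntervalIntegrable (fun _ : ℝ => c0) volume a b :=
    intervalIntegrable_const
  have i2 : IntervalIntegrable (fun t : ℝ => c1*t) volume a b := by
    apply Continuous.intervalIntegrable; fun_prop
  have i3 : IntervalIntegrable (fun t : ℝ => c2*t^2) volume a b := by
    apply Continuous.intervalIntegrable; fun_prop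
  rw [intervalIntegral.integral_add (i1.add i2) i3,
    intervalIntegral.integral_add i1 i2,
    intervalIntegral.integral_const_mul, intervalIntegral.integral_const_mul,
    integral_id, integral_pow, intervalIntegral.integral_const]
  push_cast
  simp [smul_eq_mul]
  ring

lemma refl_int (u : ℝ → ℝ) (h1 : IntervalIntegrable u volume (-(1:ℝ)/2) 0)
    (h2 : IntervalIntegrable u volume 0 (1/2)) :
    ∫ t in (-(1:ℝ)/2)..(1/2), u t = ∫ t in (0:ℝ)..(1/2), (u t + u (-t)) := by
  have h3 : IntervalIntegrable (fun t => u (-t)) volume 0 (1/2) := by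
    have h := ((IntervalIntegrable.iff_comp_neg (f := u)).mp h1).symm
    norm_num at h
    exact h
  rw [← intervalIntegral.integral_add_adjacent_intervals h1 h2,
    intervalIntegral.integral_add h2 h3]
  have h4 : ∫ t in (0:ℝ)..(1/2:ℝ), u (-t) = ∫ t in (-(1:ℝ)/2)..(0:ℝ), u t := by
    rw [intervalIntegral.integral_comp_neg]
    norm_num
  rw [h4]; ring


lemma abs_int0 : (∫ t in (-(1:ℝ)/2)..(1/2), |t|) = 1/4 := by
  have iabs : ∀ a b : ℝ, IntervalIntegrable (fun t : ℝ => |t|) volume a b :=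
    fun a b => continuous_abs.intervalIntegrable a b
  rw [refl_int _ (iabs _ _) (iabs _ _)]
  rw [intervalIntegral.integral_congr
    (g := fun t => 0 + 2*t + 0*t^2)
    (by
      intro t ht
      rw [Set.uIcc_of_le (by norm_num : (0:ℝ) ≤ 1/2)] at ht
      have h0 : 0 ≤ t := ht.1
      simp only [abs_neg, abs_of_nonneg h0]
      ring)]
  rw [poly_int]
  norm_num

section Key

variable {h : ℝ → ℝ} (hcv : ConvexOn ℝ (Set.Icc (-(1:ℝ)/2) (1/2)) h)

include hcv

/-- upper bound by endpoint max -/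
lemma ub_max : ∀ x ∈ Set.Icc (-(1:ℝ)/2) (1/2),
    h x ≤ max (h (-(1:ℝ)/2)) (h (1/2)) := by
  intro x hx
  obtain ⟨hx1, hx2⟩ := hx
  have m1 : (-(1:ℝ)/2) ∈ Set.Icc (-(1:ℝ)/2) (1/2) := by norm_num
  have m2 : (1/2:ℝ) ∈ Set.Icc (-(1:ℝ)/2) (1/2) := by norm_num
  have c := hcv.2 m1 m2 (show (0:ℝ) ≤ 1/2 - x by linarith) (show (0:ℝ) ≤ 1/2 + x by linarith) (show (1/2 - x) + (1/2 + x) = (1:ℝ) by ring)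
  simp only [smul_eq_mul] at c
  have hp : (1/2 - x) * (-(1:ℝ)/2) + (1/2 + x) * (1/2) = x := by ring
  rw [hp] at c
  have := le_max_left (h (-(1:ℝ)/2)) (h (1/2))
  have := le_max_right (h (-(1:ℝ)/2)) (h (1/2))
  nlinarith [c]

/-- symmetric two-point bound -/
lemma sym_lb : ∀ x ∈ Set.Icc (-(1:ℝ)/2) (1/2), 2 * h 0 ≤ h x + h (-x) := by
  intro x hx
  obtain ⟨hx1, hx2⟩ := hx
  have mx : x ∈ Set.Icc (-(1:ℝ)/2) (1/2) := ⟨hx1, hx2⟩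
  have mnx : -x ∈ Set.Icc (-(1:ℝ)/2) (1/2) := ⟨by linarith, by linarith⟩
  have c := hcv.2 mx mnx (show (0:ℝ) ≤ 1/2 by norm_num) (show (0:ℝ) ≤ 1/2 by norm_num) (show (1/2 : ℝ) + 1/2 = 1 by norm_num)
  simp only [smul_eq_mul] at c
  have hp : (1/2) * x + (1/2) * (-x) = (0:ℝ) := by ring
  rw [hp] at c
  linarith

/-- global absolute bound for a convex function on the interval -/
lemma bdd_abs : ∃ C : ℝ, ∀ x ∈ Set.Icc (-(1:ℝ)/2) (1/2), |h x| ≤ C := by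
  set M := max (h (-(1:ℝ)/2)) (h (1/2)) with hM
  refine ⟨|M| + |2*h 0 - M|, fun x hx => ?_⟩
  have h1 := ub_max hcv x hx
  have h2 := sym_lb hcv x hx
  have h3 := ub_max hcv (-x) ⟨by linarith [hx.1, hx.2], by linarith [hx.1, hx.2]⟩
  rw [abs_le]
  constructor
  · have : 2*h 0 - M ≤ h x := by linarith
    have := neg_abs_le (2*h 0 - M)
    have := abs_nonneg M
    linarith
  · have := le_abs_self M
    have := abs_nonneg (2*h 0 - M)
    linarith

lemma cont_on : ContinuousOn h (Set.Ioo (-(1:ℝ)/2) (1/2)) := by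
  have := (hcv.subset Set.Ioo_subset_Icc_self (convex_Ioo _ _)).continuousOn isOpen_Ioo
  exact this


/-- convexity claim on [0,1/3] -/
lemma claimA {t : ℝ} (ht0 : 0 ≤ t) (ht1 : t ≤ 1/3) :
    h t + h (-t) - 2*h 0 ≤ 3*t*(h (1/3) + h (-(1/3)) - 2*h 0) := by
  have m0 : (0:ℝ) ∈ Set.Icc (-(1:ℝ)/2) (1/2) := by norm_num
  have m13 : (1/3:ℝ) ∈ Set.Icc (-(1:ℝ)/2) (1/2) := by norm_num
  have mn13 : (-(1/3):ℝ) ∈ Set.Icc (-(1:ℝ)/2) (1/2) := by norm_num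
  have ha : (0:ℝ) ≤ 1 - 3*t := by linarith
  have hb : (0:ℝ) ≤ 3*t := by linarith
  have hab : (1 - 3*t) + 3*t = (1:ℝ) := by ring
  have c1 := hcv.2 m0 m13 ha hb hab
  have c2 := hcv.2 m0 mn13 ha hb hab
  simp only [smul_eq_mul] at c1 c2
  rw [show (1 - 3*t) * (0:ℝ) + (3*t) * (1/3) = t by ring] at c1
  rw [show (1 - 3*t) * (0:ℝ) + (3*t) * (-(1/3)) = -t by ring] at c2
  nlinarith [c1, c2]

/-- convexity claim on [1/3,1/2] -/
lemma claimB {t : ℝ} (ht0 : 1/3 ≤ t) (ht1 : t ≤ 1/2) :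
    3*t*(h (1/3) + h (-(1/3)) - 2*h 0) ≤ h t + h (-t) - 2*h 0 := by
  have ht : (0:ℝ) < t := by linarith
  have m0 : (0:ℝ) ∈ Set.Icc (-(1:ℝ)/2) (1/2) := by norm_num
  have mt : t ∈ Set.Icc (-(1:ℝ)/2) (1/2) := ⟨by linarith, ht1⟩
  have mnt : -t ∈ Set.Icc (-(1:ℝ)/2) (1/2) := ⟨by linarith, by linarith⟩
  set s : ℝ := 1/(3*t) with hs
  have hs0 : 0 < s := by positivity
  have hts : 3*t*s = 1 := by rw [hs]; field_simp
  have ha : (0:ℝ) ≤ 1 - s := by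
    have : s ≤ 1 := by rw [hs, div_le_one (by positivity)]; linarith
    linarith
  have hab : (1 - s) + s = (1:ℝ) := by ring
  have c1 := hcv.2 m0 mt ha hs0.le hab
  have c2 := hcv.2 m0 mnt ha hs0.le hab
  simp only [smul_eq_mul] at c1 c2
  rw [show (1 - s) * (0:ℝ) + s * t = s*t by ring] at c1
  rw [show (1 - s) * (0:ℝ) + s * (-t) = -(s*t) by ring] at c2
  have hst : s * t = 1/3 := by rw [hs]; field_simp
  rw [hst] at c1
  rw [hst] at c2
  have d1 := mul_le_mul_of_nonneg_left c1 (show (0:ℝ) ≤ 3*t by linarith)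
  have d2 := mul_le_mul_of_nonneg_left c2 (show (0:ℝ) ≤ 3*t by linarith)
  have e1 : 3*t*(s*h 0) = h 0 := by
    rw [show 3*t*(s*h 0) = (3*t*s)*h 0 by ring, hts, one_mul]
  have e2 : 3*t*(s*h t) = h t := by
    rw [show 3*t*(s*h t) = (3*t*s)*h t by ring, hts, one_mul]
  have e3 : 3*t*(s*h (-t)) = h (-t) := by
    rw [show 3*t*(s*h (-t)) = (3*t*s)*h (-t) by ring, hts, one_mul]
  nlinarith [d1, d2, e1, e2, e3]

/-- the combined pointwise estimate on [0,1/2] -/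
lemma pointwise {t : ℝ} (ht : t ∈ Set.Icc (0:ℝ) (1/2)) :
    (h t + h (-t)) * (1 - 3*t) ≤
      2*h 0 + (3*(h (1/3) + h (-(1/3)) - 2*h 0) - 6*h 0)*t
        + (-(9*(h (1/3) + h (-(1/3)) - 2*h 0)))*t^2 := by
  obtain ⟨ht0, ht1⟩ := ht
  have key : (h t + h (-t) - 2*h 0) * (1 - 3*t)
      ≤ 3*(h (1/3) + h (-(1/3)) - 2*h 0) * (t*(1 - 3*t)) := by
    rcases le_or_gt t (1/3) with hc | hc
    · have := mul_le_mul_of_nonneg_right (claimA hcv ht0 hc)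
        (show (0:ℝ) ≤ 1 - 3*t by linarith)
      nlinarith [this]
    · have := mul_le_mul_of_nonpos_right (claimB hcv hc.le ht1)
        (show (1:ℝ) - 3*t ≤ 0 by linarith)
      nlinarith [this]
  nlinarith [key]


lemma key {ε : ℝ} (hε : 0 < ε)
    (hint : (∫ t in (-(1:ℝ)/2)..(1/2), (h t)^2) ≤ ε^2) : |h 0| ≤ 2*ε := by
  obtain ⟨C, hC⟩ := bdd_abs hcv
  have hC0 : 0 ≤ C := le_trans (abs_nonneg _) (hC 0 (by norm_num))
  have hco := cont_on hcv
  -- memberships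
  have hIoo : ∀ {a b : ℝ}, -(1:ℝ)/2 ≤ a → b ≤ 1/2 →
      Set.Ioo a b ⊆ Set.Ioo (-(1:ℝ)/2) (1/2) :=
    fun ha hb => Set.Ioo_subset_Ioo ha hb
  have hmemIcc : ∀ x ∈ Set.Ioo (-(1:ℝ)/2) (1/2), x ∈ Set.Icc (-(1:ℝ)/2) (1/2) :=
    fun x hx => Set.Ioo_subset_Icc_self hx
  -- continuity of reflected h on (0,1/2)
  have hconeg : ContinuousOn (fun t => h (-t)) (Set.Ioo (0:ℝ) (1/2)) := by
    apply hco.comp (continuous_neg.continuousOn)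
    intro x hx
    exact ⟨by linarith [hx.2], by linarith [hx.1]⟩
  have hcor : ContinuousOn h (Set.Ioo (0:ℝ) (1/2)) :=
    hco.mono (hIoo (by norm_num) (by norm_num))
  have hmemneg : ∀ x ∈ Set.Ioo (0:ℝ) (1/2), -x ∈ Set.Icc (-(1:ℝ)/2) (1/2) :=
    fun x hx => ⟨by linarith [hx.2], by linarith [hx.1]⟩
  have hmemr : ∀ x ∈ Set.Ioo (0:ℝ) (1/2), x ∈ Set.Icc (-(1:ℝ)/2) (1/2) :=
    fun x hx => ⟨by linarith [hx.1], hx.2.le⟩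
  -- integrabilities
  have Hh : IntervalIntegrable h volume (-(1:ℝ)/2) (1/2) :=
    ii_of_bdd (by norm_num) hco (fun x hx => hC x (hmemIcc x hx))
  have Hsq : IntervalIntegrable (fun t => (h t)^2) volume (-(1:ℝ)/2) (1/2) := by
    refine ii_of_bdd (C := C^2) (by norm_num) (hco.pow 2) (fun x hx => ?_)
    rw [abs_pow]
    exact pow_le_pow_left₀ (abs_nonneg _) (hC x (hmemIcc x hx)) 2
  have hφcont : Continuous (fun t : ℝ => 1 - 3*|t|) := continuous_const.sub (continuous_const.mul continuous_abs)
  have hφbd : ∀ x : ℝ, x ∈ Set.Icc (-(1:ℝ)/2) (1/2) → abs (1  - 3*|x|) ≤ 3 := by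
    intro x hx
    have h1 : |x| ≤ 1/2 := abs_le.mpr ⟨by linarith [hx.1], hx.2⟩
    have h2 : 0 ≤ |x| := abs_nonneg x
    rw [abs_le]; constructor <;> linarith
  have Hφh : ∀ a b : ℝ, -(1:ℝ)/2 ≤ a → a ≤ b → b ≤ 1/2 →
      IntervalIntegrable (fun t => h t * (1 - 3*|t|)) volume a b := by
    intro a b ha hab hb
    refine ii_of_bdd (C := C*3) hab
      ((hco.mono (hIoo ha hb)).mul (hφcont.continuousOn)) (fun x hx => ?_)
    have hxI : x ∈ Set.Icc (-(1:ℝ)/2) (1/2) :=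
      hmemIcc x (hIoo ha hb hx)
    rw [abs_mul]
    exact mul_le_mul (hC x hxI) (hφbd x hxI) (abs_nonneg _) hC0
  have Hφsq : IntervalIntegrable (fun t : ℝ => (1 - 3*|t|)^2) volume (-(1:ℝ)/2) (1/2) :=
    (hφcont.pow 2).intervalIntegrable _ _
  -- ∫ φ² = 1/4
  have hφ2 : (∫ t in (-(1:ℝ)/2)..(1/2), (1 - 3*|t|)^2) = 1/4 := by
    have e : ∀ t : ℝ, (1 - 3*|t|)^2 = (1 + 0*t + 9*t^2) - 6*|t| := by
      intro t
      rw [show (1 - 3*|t|)^2 = 1 - 6*|t| + 9*|t|^2 by ring, sq_abs]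
      ring
    simp only [e]
    rw [intervalIntegral.integral_sub
      (by apply Continuous.intervalIntegrable; fun_prop)
      (by
        have : (fun t : ℝ => 6*|t|) = fun t : ℝ => 6*|t| := rfl
        exact (continuous_const.mul continuous_abs).intervalIntegrable _ _),
      intervalIntegral.integral_const_mul, abs_int0, poly_int]
    norm_num
  rcases le_or_gt 0 (h 0) with hpos | hneg
  · -- case h 0 ≥ 0 : h 0 ≤ ∫ h ≤ ε
    have Hsum : IntervalIntegrable (fun t => h t + h (-t)) volume 0 (1/2) := by
      refine ii_of_bdd (C := C + C) (by norm_num) (hcor.add hconeg) (fun x hx => ?_)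
      calc |h x + h (-x)| ≤ |h x| + |h (-x)| := abs_add_le _ _
        _ ≤ C + C := add_le_add (hC x (hmemr x hx)) (hC _ (hmemneg x hx))
    have e1 : (∫ t in (-(1:ℝ)/2)..(1/2), h t) = ∫ t in (0:ℝ)..(1/2), (h t + h (-t)) :=
      refl_int h
        (ii_of_bdd (by norm_num) (hco.mono (hIoo (by norm_num) (by norm_num)))
          (fun x hx => hC x (hmemIcc x (hIoo (by norm_num) (by norm_num) hx))))
        (ii_of_bdd (by norm_num) hcor (fun x hx => hC x (hmemr x hx)))
    have e2 : h 0 ≤ ∫ t in (0:ℝ)..(1/2), (h t + h (-t)) := by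
      have := intervalIntegral.integral_mono_on (by norm_num : (0:ℝ) ≤ 1/2)
        (intervalIntegrable_const (c := 2*h 0)) Hsum
        (fun x hx => sym_lb hcv x ⟨by linarith [hx.1], hx.2⟩)
      rw [intervalIntegral.integral_const] at this
      simpa using this
    have e3 : (∫ t in (-(1:ℝ)/2)..(1/2), h t) ≤ ε := by
      have pw : ∀ x ∈ Set.Icc (-(1:ℝ)/2) (1/2),
          h x ≤ (1/(2*ε))*(h x)^2 + ε/2 := by
        intro x hx
        have h4 : (0:ℝ) < 2*ε := by linarith
        have key : 2*ε*(h x) ≤ (h x)^2 + ε^2 := by nlinarith [sq_nonneg (h x - ε)]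
        rw [← sub_nonneg]
        have : (1/(2*ε))*(h x)^2 + ε/2 - h x
            = (1/(2*ε)) * ((h x)^2 + ε^2 - 2*ε*(h x)) := by field_simp
        rw [this]
        apply mul_nonneg (by positivity)
        linarith [key]
      have Hrhs : IntervalIntegrable (fun t => (1/(2*ε))*(h t)^2 + ε/2)
          volume (-(1:ℝ)/2) (1/2) :=
        (Hsq.const_mul _).add intervalIntegrable_const
      have mono := intervalIntegral.integral_mono_on (by norm_num) Hh Hrhs pw
      rw [intervalIntegral.integral_add (Hsq.const_mul _) intervalIntegrable_const,
        intervalIntegral.integral_const_mul, intervalIntegral.integral_const] at mono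
      have h5 : (1/(2*ε)) * (∫ t in (-(1:ℝ)/2)..(1/2), (h t)^2) ≤ (1/(2*ε)) * ε^2 :=
        mul_le_mul_of_nonneg_left hint (by positivity)
      have h6 : (1/(2*ε)) * ε^2 = ε/2 := by field_simp
      have h7 : ((1:ℝ)/2 - (-(1:ℝ)/2)) • (ε/2) = ε/2 := by
        rw [smul_eq_mul]; norm_num
      rw [h7] at mono
      linarith
    rw [abs_of_nonneg hpos]
    rw [e1] at e3
    linarith
  · -- case h 0 < 0
    have hφbd' : ∀ x ∈ Set.Ioo (0:ℝ) (1/2), abs (1 - 3*x) ≤ 3 := by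
      intro x hx
      rw [abs_le]; constructor <;> [linarith [hx.2]; linarith [hx.1]]
    have Hsumφ : IntervalIntegrable (fun t => (h t + h (-t))*(1-3*t)) volume 0 (1/2) := by
      refine ii_of_bdd (C := (C+C)*3) (by norm_num)
        ((hcor.add hconeg).mul ((continuous_const.sub
          (continuous_const.mul continuous_id)).continuousOn)) (fun x hx => ?_)
      rw [abs_mul]
      refine mul_le_mul ?_ (hφbd' x hx) (abs_nonneg _) (by linarith)
      calc |h x + h (-x)| ≤ |h x| + |h (-x)| := abs_add_le _ _
        _ ≤ C + C := add_le_add (hC x (hmemr x hx)) (hC _ (hmemneg x hx))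
    have eA : (∫ t in (-(1:ℝ)/2)..(1/2), h t * (1-3*|t|))
        = ∫ t in (0:ℝ)..(1/2), (h t + h (-t))*(1-3*t) := by
      rw [refl_int _ (Hφh _ _ (le_refl _) (by norm_num) (by norm_num))
        (Hφh _ _ (by norm_num) (by norm_num) (le_refl _))]
      apply intervalIntegral.integral_congr
      intro t ht
      rw [Set.uIcc_of_le (by norm_num : (0:ℝ) ≤ 1/2)] at ht
      simp only [abs_neg, abs_of_nonneg ht.1]
      ring
    have Hpoly : IntervalIntegrable (fun t : ℝ =>
        2*h 0 + (3*(h (1/3) + h (-(1/3)) - 2*h 0) - 6*h 0)*t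
          + (-(9*(h (1/3) + h (-(1/3)) - 2*h 0)))*t^2) volume 0 (1/2) := by
      apply Continuous.intervalIntegrable; fun_prop
    have eB : (∫ t in (0:ℝ)..(1/2), (h t + h (-t))*(1-3*t)) ≤ h 0 / 4 := by
      have mono := intervalIntegral.integral_mono_on (by norm_num : (0:ℝ) ≤ 1/2)
        Hsumφ Hpoly (fun x hx => pointwise hcv hx)
      rw [poly_int] at mono
      have : 2*h 0*((1:ℝ)/2-0)
          + (3*(h (1/3) + h (-(1/3)) - 2*h 0) - 6*h 0)*((1/2:ℝ)^2-0^2)/2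
          + (-(9*(h (1/3) + h (-(1/3)) - 2*h 0)))*((1/2:ℝ)^3-0^3)/3 = h 0 / 4 := by
        ring
      linarith
    have pwl : ∀ x ∈ Set.Icc (-(1:ℝ)/2) (1/2),
        -((h x)^2 + 4*ε^2*(1-3*|x|)^2) ≤ 4*ε*(h x*(1-3*|x|)) := by
      intro x _
      nlinarith [sq_nonneg (h x + 2*ε*(1-3*|x|))]
    have ILHS : IntervalIntegrable (fun t => -((h t)^2 + 4*ε^2*(1-3*|t|)^2))
        volume (-(1:ℝ)/2) (1/2) := (Hsq.add (Hφsq.const_mul _)).neg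
    have IRHS : IntervalIntegrable (fun t => 4*ε*(h t*(1-3*|t|)))
        volume (-(1:ℝ)/2) (1/2) :=
      (Hφh _ _ (le_refl _) (by norm_num) (le_refl _)).const_mul _
    have mono2 := intervalIntegral.integral_mono_on (by norm_num) ILHS IRHS pwl
    rw [intervalIntegral.integral_neg,
      intervalIntegral.integral_add Hsq (Hφsq.const_mul _),
      intervalIntegral.integral_const_mul, hφ2,
      intervalIntegral.integral_const_mul] at mono2
    rw [eA] at mono2
    have h8 : 4*ε*(∫ t in (0:ℝ)..(1/2), (h t + h (-t))*(1-3*t)) ≤ 4*ε*(h 0/4) :=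
      mul_le_mul_of_nonneg_left eB (by linarith)
    rw [abs_of_neg hneg]
    nlinarith [hε]


end Key

/-- the tent witness is convex -/
lemma tent_convex (k ε : ℝ) (hε : 0 < ε) :
    ConvexOn ℝ (Set.Icc (-(1:ℝ)/2) (1/2)) (fun t => k*t + 6*ε*|t| - 2*ε) := by
  refine ⟨convex_Icc _ _, fun x _ y _ a b ha hb hab => ?_⟩
  simp only [smul_eq_mul]
  have habs : |a*x + b*y| ≤ a*|x| + b*|y| := by
    calc |a*x+b*y| ≤ |a*x| + |b*y| := abs_add_le _ _
      _ = a*|x| + b*|y| := by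
          rw [abs_mul, abs_mul, abs_of_nonneg ha, abs_of_nonneg hb]
  have h6 : 6*ε*|a*x+b*y| ≤ 6*ε*(a*|x| + b*|y|) :=
    mul_le_mul_of_nonneg_left habs (by linarith)
  have h2 : a*(2*ε) + b*(2*ε) = 2*ε := by linear_combination (2*ε) * hab
  nlinarith [h6, h2]

/-- the tent witness integral -/
lemma tent_int (k ε : ℝ) :
    (∫ t in (-(1:ℝ)/2)..(1/2), ((k*t + 6*ε*|t| - 2*ε) - k*t)^2) = ε^2 := by
  have e : ∀ t : ℝ, ((k*t + 6*ε*|t| - 2*ε) - k*t)^2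
      = (4*ε^2 + 0*t + 36*ε^2*t^2) - 24*ε^2*|t| := by
    intro t
    rw [show ((k*t + 6*ε*|t| - 2*ε) - k*t)^2
      = 36*ε^2*|t|^2 - 24*ε^2*|t| + 4*ε^2 by ring, sq_abs]
    ring
  simp only [e]
  rw [intervalIntegral.integral_sub
    (by apply Continuous.intervalIntegrable; fun_prop)
    (by exact (continuous_const.mul continuous_abs).intervalIntegrable _ _),
    intervalIntegral.integral_const_mul, abs_int0, poly_int]
  ring

end ModulusAux

/-- Example 1 of Cai, Low and Xia (2013), convex class: for `f_k t = k t` with `k ≥ 0`, the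
local modulus over the convex class equals `2ε` for every `ε > 0`. -/
theorem modulus_linear_convex (k ε : ℝ) (hk : 0 ≤ k) (hε : 0 < ε) :
    omegaConvex ε (fun t => k * t) = 2 * ε := by
  unfold omegaConvex
  have hub : ∀ d ∈ {d : ℝ | ∃ g : ℝ → ℝ, ConvexOn ℝ (Set.Icc (-(1:ℝ)/2) (1/2)) g ∧
      (∫ t in (-(1:ℝ)/2)..(1/2), (g t - (fun t => k * t) t)^2) ≤ ε^2 ∧
      d = |g 0 - (fun t => k * t) 0|}, d ≤ 2*ε := by
    rintro d ⟨g, hg, hgint, rfl⟩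
    have hcvh : ConvexOn ℝ (Set.Icc (-(1:ℝ)/2) (1/2)) (fun t => g t - k*t) := by
      refine ⟨hg.1, fun x hx y hy a b ha hb hab => ?_⟩
      have := hg.2 hx hy ha hb hab
      simp only [smul_eq_mul] at this ⊢
      nlinarith [this]
    have hkey := ModulusAux.key hcvh hε (by exact hgint)
    simpa using hkey
  have hmem : 2*ε ∈ {d : ℝ | ∃ g : ℝ → ℝ, ConvexOn ℝ (Set.Icc (-(1:ℝ)/2) (1/2)) g ∧
      (∫ t in (-(1:ℝ)/2)..(1/2), (g t - (fun t => k * t) t)^2) ≤ ε^2 ∧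
      d = |g 0 - (fun t => k * t) 0|} := by
    refine ⟨fun t => k*t + 6*ε*|t| - 2*ε, ModulusAux.tent_convex k ε hε,
      le_of_eq (ModulusAux.tent_int k ε), ?_⟩
    simp only []
    rw [show k*(0:ℝ) + 6*ε*|(0:ℝ)| - 2*ε - k*0 = -(2*ε) by simp, abs_neg,
      abs_of_nonneg (by linarith)]
  apply le_antisymm
  · exact Real.sSup_le hub (by linarith)
  · exact le_csSup ⟨2*ε, hub⟩ hmem
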